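/- Let h : ℕ → ℕ be monotone, γ and α ordinal terms below ε₀, and suppose h is eventually bounded by F_γ (the standard fast-growing function at level γ, built from the successor function). Then f_α, the fast-growing hierarchy built from h, is eventually bounded by F_{γ+α}; i.e., there exists x₀ such that for all x ≥ x₀, f_α(x) ≤ F_{γ+α}(x). -/

import Mathlib

/-- Ordinal terms below ε₀: a term is a list of exponents,
`cons β γ` denoting ω^β + γ. -/
inductive OT : Type
  | nil : OT
  | cons : OT → OT → OT
deriving DecidableEq

namespace OT

/-- The term 1 = ω^0. -/
def one : OT := cons nil nil

/-- Syntactic concatenation (direct sum) of ordinal terms. -/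
def add : OT → OT → OT
  | nil, b => b
  | cons e r, b => cons e (add r b)

/-- A term ω^{β₁}+...+ω^{β_m} is a successor iff m > 0 and β_m = 0. -/
def isSucc : OT → Bool
  | nil => false
  | cons e nil => e == nil
  | cons _ (cons e r) => isSucc (cons e r)

/-- Remove the last summand ω^0 of a successor term. -/
def pred : OT → OT
  | nil => nil
  | cons _ nil => nil
  | cons e (cons e' r) => cons e (pred (cons e' r))

/-- Limit terms. -/
def isLim (a : OT) : Prop := a ≠ nil ∧ isSucc a = false

/-- ω^β · n as an ordinal term. -/
def rep : ℕ → OT → OT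
  | 0, _ => nil
  | n + 1, β => cons β (rep n β)

/-- The standard assignment of fundamental sequences (with ω_x = x+1):
(γ+ω^{β+1})_x = γ+ω^β·(x+1) and (γ+ω^λ)_x = γ+ω^{λ_x}. -/
def fseq : OT → ℕ → OT
  | nil, _ => nil
  | cons β nil, x =>
      if β = nil then nil
      else if isSucc β then rep (x + 1) (pred β)
      else cons (fseq β x) nil
  | cons β (cons e r), x => cons β (fseq (cons e r) x)

/-- Syntactic ordering of terms (on CNF terms this is the ordinal ordering). -/
def lt : OT → OT → Prop
  | _, nil => False
  | nil, cons _ _ => True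
  | cons a r, cons b s => lt a b ∨ (a = b ∧ lt r s)

def le (a b : OT) : Prop := lt a b ∨ a = b

/-- Cantor normal form: exponents weakly decreasing, all in CNF. -/
def isCNF : OT → Prop
  | nil => True
  | cons b nil => isCNF b
  | cons b (cons e r) => isCNF b ∧ le e b ∧ isCNF (cons e r)

/-- Number of occurrences of the exponent β in a term. -/
def count (β : OT) : OT → ℕ
  | nil => 0
  | cons b r => (if b = β then 1 else 0) + count β r

/-- k-lean: every coefficient (at every level) is ≤ k. -/
def leanOrd (k : ℕ) : OT → Prop
  | nil => True
  | cons b r => count b (cons b r) ≤ k ∧ leanOrd k b ∧ leanOrd k r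

end OT

/-- Pointwise-at-x ordering: smallest transitive relation with
α ⊏_x α+1 and λ_x ⊏_x λ. -/
inductive Ptw (x : ℕ) : OT → OT → Prop
  | succ (a : OT) : Ptw x a (OT.add a OT.one)
  | lim (l : OT) : OT.isLim l → Ptw x (OT.fseq l x) l
  | trans {a b c : OT} : Ptw x a b → Ptw x b c → Ptw x a c

namespace OT

open Ordinal

/-- Ordinal measure of a term. -/
noncomputable def mu : OT → Ordinal.{0}
  | nil => 0
  | cons b r => omega0 ^ (mu b) + mu r

theorem mu_pos {a : OT} (ha : a ≠ nil) : 0 < mu a := by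
  cases a with
  | nil => exact absurd rfl ha
  | cons b r =>
    have : (0:Ordinal) < omega0 ^ mu b := opow_pos _ omega0_pos
    calc (0:Ordinal) < omega0 ^ mu b := this
      _ ≤ omega0 ^ mu b + mu r := le_add_right le_rfl

theorem add_nil (a : OT) : add a nil = a := by
  induction a with
  | nil => rfl
  | cons e r ihe ihr => simp [add, ihr]

theorem add_assoc (a b c : OT) : add (add a b) c = add a (add b c) := by
  induction a with
  | nil => rfl
  | cons e r ihe ihr => simp [add, ihr]

theorem mu_add (a b : OT) : mu (add a b) = mu a + mu b := by
  induction a with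
  | nil => simp [add, mu]
  | cons e r ihe ihr => simp [add, mu, ihr, _root_.add_assoc]

theorem add_ne_nil (a : OT) {b : OT} (hb : b ≠ nil) : add a b ≠ nil := by
  cases a with
  | nil => exact hb
  | cons e r => simp [add]

theorem isSucc_ne_nil {a : OT} (h : isSucc a = true) : a ≠ nil := by
  cases a with
  | nil => simp [isSucc] at h
  | cons e r => simp

theorem one_ne_nil : one ≠ nil := by simp [one]

theorem isSucc_add (a : OT) {b : OT} (hb : b ≠ nil) :
    isSucc (add a b) = isSucc b := by
  induction a with
  | nil => rfl
  | cons e r ihe ihr =>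
    show isSucc (cons e (add r b)) = isSucc b
    rcases hs : add r b with _ | ⟨e', r'⟩
    · exact absurd hs (add_ne_nil r hb)
    · rw [show isSucc (cons e (cons e' r')) = isSucc (cons e' r') from rfl, ← hs, ihr]

theorem pred_add (a : OT) {b : OT} (hb : b ≠ nil) :
    pred (add a b) = add a (pred b) := by
  induction a with
  | nil => rfl
  | cons e r ihe ihr =>
    show pred (cons e (add r b)) = cons e (add r (pred b))
    rcases hs : add r b with _ | ⟨e', r'⟩
    · exact absurd hs (add_ne_nil r hb)
    · rw [show pred (cons e (cons e' r')) = cons e (pred (cons e' r')) from rfl, ← hs, ihr]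

theorem fseq_add (a : OT) {b : OT} (hb : b ≠ nil) (z : ℕ) :
    fseq (add a b) z = add a (fseq b z) := by
  induction a with
  | nil => rfl
  | cons e r ihe ihr =>
    show fseq (cons e (add r b)) z = cons e (add r (fseq b z))
    rcases hs : add r b with _ | ⟨e', r'⟩
    · exact absurd hs (add_ne_nil r hb)
    · rw [show fseq (cons e (cons e' r')) z = cons e (fseq (cons e' r') z) from rfl, ← hs, ihr]

theorem isSucc_add_one (a : OT) : isSucc (add a one) = true := by
  rw [isSucc_add a one_ne_nil]; rfl

theorem pred_add_one (a : OT) : pred (add a one) = a := by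
  rw [pred_add a one_ne_nil, show pred one = nil from rfl, add_nil]

theorem isLim_add (a : OT) {b : OT} (hb : isLim b) : isLim (add a b) :=
  ⟨add_ne_nil a hb.1, by rw [isSucc_add a hb.1]; exact hb.2⟩

theorem rep_add (m n : ℕ) (c : OT) : rep (m + n) c = add (rep m c) (rep n c) := by
  induction m with
  | zero => rw [Nat.zero_add]; rfl
  | succ m ih =>
    rw [show m + 1 + n = (m + n) + 1 from by omega]
    show cons c (rep (m + n) c) = cons c (add (rep m c) _)
    rw [ih]

theorem rep_ne_nil {n : ℕ} (hn : 0 < n) (c : OT) : rep n c ≠ nil := by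
  cases n with
  | zero => omega
  | succ n => simp [rep]

theorem mu_rep (n : ℕ) (c : OT) : mu (rep n c) = omega0 ^ (mu c) * n := by
  induction n with
  | zero => simp [rep, mu]
  | succ n ih =>
    show mu (cons c (rep n c)) = _
    rw [mu, ih]
    calc omega0 ^ mu c + omega0 ^ mu c * n = omega0 ^ mu c * (1 + n) := by
          rw [mul_add, mul_one]
      _ = omega0 ^ mu c * (n + 1 : ℕ) := by
          congr 1
          norm_cast
          omega

theorem mu_pred_lt : ∀ {a : OT}, a ≠ nil → mu (pred a) < mu a := by
  intro a
  induction a with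
  | nil => intro hh; exact absurd rfl hh
  | cons e r ihe ihr =>
    intro _
    cases r with
    | nil =>
      show mu nil < mu (cons e nil)
      exact mu_pos (by simp)
    | cons e' r' =>
      show mu (cons e (pred (cons e' r'))) < mu (cons e (cons e' r'))
      show omega0 ^ mu e + mu (pred (cons e' r')) < omega0 ^ mu e + mu (cons e' r')
      exact add_lt_add_right (ihr (by simp)) _

theorem isSucc_cons_nil (e : OT) : isSucc (cons e nil) = (e == nil) := rfl

theorem fseq_cons_nil_succ {e : OT} (he : isSucc e = true) (z : ℕ) :
    fseq (cons e nil) z = rep (z + 1) (pred e) := by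
  have hne : e ≠ nil := isSucc_ne_nil he
  simp [fseq, hne, he]

theorem fseq_cons_nil_lim {e : OT} (hne : e ≠ nil) (he : isSucc e = false) (z : ℕ) :
    fseq (cons e nil) z = cons (fseq e z) nil := by
  simp [fseq, hne, he]

theorem fseq_cons_cons (b e r : OT) (z : ℕ) :
    fseq (cons b (cons e r)) z = cons b (fseq (cons e r) z) := rfl

theorem mu_fseq_lt : ∀ {a : OT}, a ≠ nil → ∀ z : ℕ, mu (fseq a z) < mu a := by
  intro a
  induction a with
  | nil => intro hh; exact absurd rfl hh
  | cons e r ihe ihr =>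
    intro _ z
    cases r with
    | nil =>
      by_cases he : e = nil
      · subst he
        show mu nil < mu (cons nil nil)
        exact mu_pos (by simp)
      · have hmue : 0 < mu e := mu_pos he
        rcases hs : isSucc e with _ | _
        · rw [fseq_cons_nil_lim he hs]
          show omega0 ^ mu (fseq e z) + mu nil < omega0 ^ mu e + mu nil
          have := (Ordinal.opow_lt_opow_iff_right one_lt_omega0).2 (ihe he z)
          rw [show mu nil = 0 from rfl, add_zero, add_zero]
          exact this
        · rw [fseq_cons_nil_succ hs]
          rw [mu_rep]
          show _ < omega0 ^ mu e + mu nil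
          have h1 : omega0 ^ mu (pred e) < omega0 ^ mu e :=
            (Ordinal.opow_lt_opow_iff_right one_lt_omega0).2 (mu_pred_lt he)
          have := Ordinal.mul_lt_omega0_opow hmue h1 (nat_lt_omega0 (z + 1))
          calc omega0 ^ mu (pred e) * (z + 1 : ℕ) < omega0 ^ mu e := this
            _ ≤ omega0 ^ mu e + mu nil := le_add_right le_rfl
    | cons e' r' =>
      rw [fseq_cons_cons]
      show omega0 ^ mu e + mu (fseq (cons e' r') z) < omega0 ^ mu e + mu (cons e' r')
      exact add_lt_add_right (ihr (by simp) z) _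

theorem fseq_ne_nil {e : OT} (hne : e ≠ nil) (z : ℕ) : fseq (cons e nil) z ≠ nil := by
  rcases hs : isSucc e with _ | _
  · rw [fseq_cons_nil_lim hne hs]; simp
  · rw [fseq_cons_nil_succ hs]; exact rep_ne_nil (by omega) _

theorem trichotomy (a : OT) : a = nil ∨ isSucc a = true ∨ isLim a := by
  by_cases hn : a = nil
  · exact Or.inl hn
  · rcases hs : isSucc a with _ | _
    · exact Or.inr (Or.inr ⟨hn, hs⟩)
    · exact Or.inr (Or.inl rfl)

theorem mu_lt_of_ptw {z : ℕ} : ∀ {c d : OT}, Ptw z c d → mu c < mu d := by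
  intro c d hp
  induction hp with
  | succ a =>
    rw [mu_add]
    have : mu one = 1 := by simp [one, mu]
    rw [this]
    exact lt_add_one _
  | lim l hl => exact mu_fseq_lt hl.1 z
  | trans h1 h2 ih1 ih2 => exact ih1.trans ih2

theorem ptw_add_left {z : ℕ} (c : OT) : ∀ {t t' : OT}, Ptw z t t' →
    Ptw z (add c t) (add c t') := by
  intro t t' hp
  induction hp with
  | succ a =>
    rw [← add_assoc]
    exact Ptw.succ _
  | lim l hl =>
    rw [← fseq_add c hl.1]
    exact Ptw.lim _ (isLim_add c hl)
  | trans h1 h2 ih1 ih2 => exact ih1.trans ih2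

theorem add_cons_nil (c e d : OT) : add (add c (cons e nil)) d = add c (cons e d) := by
  rw [add_assoc]; rfl

/-- `c ⊏_z c + ω^e`. -/
theorem ptw_add_single (z : ℕ) : ∀ (e c : OT), Ptw z c (add c (cons e nil)) := by
  suffices H : ∀ o : Ordinal, ∀ e : OT, mu e < o → ∀ c : OT, Ptw z c (add c (cons e nil)) from
    fun e c => H (mu e + 1) e (lt_add_one _) c
  intro o
  induction o using Ordinal.induction with
  | _ o IH =>
    intro e he c
    by_cases hnil : e = nil
    · subst hnil; exact Ptw.succ c
    · have hLim : isLim (add c (cons e nil)) := by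
        refine isLim_add c ⟨by simp, ?_⟩
        rw [isSucc_cons_nil]
        simpa using hnil
      have hstep : ∀ e' : OT, mu e' < mu e → ∀ c' : OT, Ptw z c' (add c' (cons e' nil)) :=
        fun e' he' c' => IH (mu e) he e' he' c'
      rcases hs : isSucc e with _ | _
      · -- e is a limit exponent
        have h1 : Ptw z c (add c (cons (fseq e z) nil)) :=
          hstep (fseq e z) (mu_fseq_lt hnil z) c
        have h2 : fseq (add c (cons e nil)) z = add c (cons (fseq e z) nil) := by
          rw [fseq_add c (by simp : cons e nil ≠ nil), fseq_cons_nil_lim hnil hs]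
        exact h1.trans (by rw [← h2]; exact Ptw.lim _ hLim)
      · -- e is a successor exponent
        have hpe : mu (pred e) < mu e := mu_pred_lt hnil
        have chain : ∀ n : ℕ, Ptw z c (add c (rep (n + 1) (pred e))) := by
          intro n
          induction n with
          | zero => exact hstep (pred e) hpe c
          | succ n ihn =>
            have h3 : rep (n + 1 + 1) (pred e) = add (rep (n + 1) (pred e)) (cons (pred e) nil) := by
              rw [show n + 1 + 1 = (n + 1) + 1 from rfl, rep_add]
              rfl
            rw [h3, ← add_assoc]
            exact ihn.trans (hstep (pred e) hpe _)
        have h2 : fseq (add c (cons e nil)) z = add c (rep (z + 1) (pred e)) := by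
          rw [fseq_add c (by simp : cons e nil ≠ nil), fseq_cons_nil_succ hs]
        exact (chain z).trans (by rw [← h2]; exact Ptw.lim _ hLim)

theorem ptw_add (z : ℕ) : ∀ (d : OT), d ≠ nil → ∀ (c : OT), Ptw z c (add c d) := by
  intro d
  induction d with
  | nil => intro hh; exact absurd rfl hh
  | cons e d' ihe ihd =>
    intro _ c
    cases d' with
    | nil => exact ptw_add_single z e c
    | cons e' r' =>
      have h1 := ptw_add_single z e c
      have h2 := ihd (by simp) (add c (cons e nil))
      rw [add_cons_nil] at h2
      exact h1.trans h2

/-- `b ⊏_z b' → ω^b ⊏_z ω^{b'}`. -/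
theorem ptw_omega {z : ℕ} : ∀ {b b' : OT}, Ptw z b b' →
    Ptw z (cons b nil) (cons b' nil) := by
  intro b b' hp
  induction hp with
  | succ a =>
    have hne : add a one ≠ nil := add_ne_nil a one_ne_nil
    have hLim : isLim (cons (add a one) nil) := by
      refine ⟨by simp, ?_⟩
      rw [isSucc_cons_nil]
      simpa using hne
    have hfs : fseq (cons (add a one) nil) z = rep (z + 1) a := by
      rw [fseq_cons_nil_succ (isSucc_add_one a), pred_add_one]
    have hlast : Ptw z (rep (z + 1) a) (cons (add a one) nil) := by
      rw [← hfs]; exact Ptw.lim _ hLim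
    cases z with
    | zero => exact hlast
    | succ m =>
      have h1 : rep (m + 1 + 1) a = add (cons a nil) (rep (m + 1) a) := by
        rw [show m + 1 + 1 = 1 + (m + 1) from by omega, rep_add]
        rfl
      have h2 : Ptw (m + 1) (cons a nil) (rep (m + 1 + 1) a) := by
        rw [h1]
        exact ptw_add _ _ (rep_ne_nil (by omega) a) _
      exact h2.trans hlast
  | lim l hl =>
    have hLim : isLim (cons l nil) := by
      refine ⟨by simp, ?_⟩
      rw [isSucc_cons_nil]
      simpa using hl.1
    have hfs : fseq (cons l nil) z = cons (fseq l z) nil := fseq_cons_nil_lim hl.1 hl.2 z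
    rw [← hfs]
    exact Ptw.lim _ hLim
  | trans h1 h2 ih1 ih2 => exact ih1.trans ih2

/-- Monotonicity of fundamental sequences w.r.t. pointwise ordering. -/
theorem fseq_mono : ∀ {a : OT}, isLim a → ∀ {y z : ℕ}, y ≤ z →
    fseq a y = fseq a z ∨ Ptw z (fseq a y) (fseq a z) := by
  intro a
  induction a with
  | nil => intro hl; exact absurd rfl hl.1
  | cons e r ihe ihr =>
    intro hl y z hyz
    cases r with
    | cons e' r' =>
      have hlr : isLim (cons e' r') := ⟨by simp, hl.2⟩
      rw [fseq_cons_cons, fseq_cons_cons]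
      rcases ihr hlr hyz with heq | hptw
      · exact Or.inl (by rw [heq])
      · right
        have := ptw_add_left (z := z) (cons e nil) hptw
        simpa [add] using this
    | nil =>
      have hne : e ≠ nil := by
        intro hh
        have h2 := hl.2
        rw [hh, isSucc_cons_nil] at h2
        simp at h2
      rcases hs : isSucc e with _ | _
      · -- e limit exponent
        rw [fseq_cons_nil_lim hne hs, fseq_cons_nil_lim hne hs]
        rcases ihe ⟨hne, hs⟩ hyz with heq | hptw
        · exact Or.inl (by rw [heq])
        · exact Or.inr (ptw_omega hptw)
      · -- e successor exponent
        rw [fseq_cons_nil_succ hs, fseq_cons_nil_succ hs]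
        rcases Nat.eq_or_lt_of_le hyz with heq | hlt
        · exact Or.inl (by rw [heq])
        · right
          have hsplit : rep (z + 1) (pred e) =
              add (rep (y + 1) (pred e)) (rep (z - y) (pred e)) := by
            rw [← rep_add, show y + 1 + (z - y) = z + 1 from by omega]
          rw [hsplit]
          exact ptw_add z _ (rep_ne_nil (by omega) _) _

theorem self_le_iter {p : ℕ → ℕ} (hp : ∀ y, y < p y) : ∀ (n : ℕ) (x : ℕ), x ≤ p^[n] x := by
  intro n
  induction n with
  | zero => intro x; rfl
  | succ n ih =>
    intro x
    rw [Function.iterate_succ_apply']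
    exact le_trans (ih x) (hp _).le

theorem lt_iter {p : ℕ → ℕ} (hp : ∀ y, y < p y) : ∀ (n : ℕ) (x : ℕ), x < p^[n + 1] x := by
  intro n x
  rw [Function.iterate_succ_apply']
  exact lt_of_le_of_lt (self_le_iter hp n x) (hp _)

section Fhier

variable {F : OT → ℕ → ℕ}
variable (hF0 : ∀ x, F OT.nil x = x + 1)
variable (hFs : ∀ a x, OT.isSucc a = true → F a x = (F (OT.pred a))^[x + 1] x)
variable (hFl : ∀ a x, OT.isLim a → F a x = F (OT.fseq a x) x)

/-- combined property of a term for the F-hierarchy -/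
def Fgood (F : OT → ℕ → ℕ) (d : OT) : Prop :=
  (∀ x, x < F d x) ∧ (∀ x y, x ≤ y → F d x ≤ F d y) ∧
    (∀ (z : ℕ) (c : OT), Ptw z c d → F c z ≤ F d z)

include hFs hFl in
theorem Fgood_ptw {B : Ordinal} (H : ∀ b, mu b < B → Fgood F b) :
    ∀ (z : ℕ) {c d : OT}, Ptw z c d → mu d ≤ B → F c z ≤ F d z := by
  intro z c d hp
  induction hp with
  | succ a =>
    intro hB
    have ha : mu a < B := lt_of_lt_of_le (mu_lt_of_ptw (Ptw.succ (x := z) a)) hB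
    obtain ⟨h1, h2, _⟩ := H a ha
    rw [hFs _ _ (isSucc_add_one a), pred_add_one]
    rw [Function.iterate_succ_apply']
    exact h2 _ _ (self_le_iter h1 z z)
  | lim l hl =>
    intro _
    exact (hFl _ _ hl).ge
  | trans h1 h2 ih1 ih2 =>
    intro hB
    have hb : mu _ < B := lt_of_lt_of_le (mu_lt_of_ptw h2) hB
    exact le_trans ((H _ hb).2.2 _ _ h1) (ih2 hB)

include hF0 hFs hFl in
theorem Fgood_all : ∀ d : OT, Fgood F d := by
  suffices H : ∀ o : Ordinal, ∀ d : OT, mu d < o → Fgood F d from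
    fun d => H (mu d + 1) d (lt_add_one _)
  intro o
  induction o using Ordinal.induction with
  | _ o IHo =>
    intro d hd
    have IH : ∀ b, mu b < mu d → Fgood F b := fun b hb => IHo (mu d) hd b hb
    have part3 : ∀ (z : ℕ) (c : OT), Ptw z c d → F c z ≤ F d z :=
      fun z c hp => Fgood_ptw hFs hFl IH z hp le_rfl
    have part1 : ∀ x, x < F d x := by
      intro x
      rcases trichotomy d with hn | hs | hl
      · subst hn; rw [hF0]; omega
      · rw [hFs d x hs]
        have hpd := IH (pred d) (mu_pred_lt (isSucc_ne_nil hs))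
        exact lt_iter hpd.1 x x
      · rw [hFl d x hl]
        exact (IH _ (mu_fseq_lt hl.1 x)).1 x
    refine ⟨part1, ?_, part3⟩
    have step : ∀ x, F d x ≤ F d (x + 1) := by
      intro x
      rcases trichotomy d with hn | hs | hl
      · subst hn; rw [hF0, hF0]; omega
      · rw [hFs d x hs, hFs d (x + 1) hs]
        have hpd := IH (pred d) (mu_pred_lt (isSucc_ne_nil hs))
        have hmono : Monotone (F (pred d)) := fun a b hab => hpd.2.1 a b hab
        calc (F (pred d))^[x + 1] x ≤ (F (pred d))^[x + 1] (x + 1) :=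
              hmono.iterate (x + 1) (by omega)
          _ ≤ (F (pred d))^[x + 1 + 1] (x + 1) := by
              rw [Function.iterate_succ_apply]
              exact hmono.iterate (x + 1) (hpd.1 (x + 1)).le
      · rw [hFl d x hl, hFl d (x + 1) hl]
        have h1 : F (fseq d x) x ≤ F (fseq d x) (x + 1) :=
          (IH _ (mu_fseq_lt hl.1 x)).2.1 x (x + 1) (by omega)
        refine h1.trans ?_
        rcases fseq_mono hl (show x ≤ x + 1 by omega) with heq | hptw
        · rw [heq]
        · exact (IH _ (mu_fseq_lt hl.1 (x + 1))).2.2 (x + 1) _ hptw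
    intro x y hxy
    induction y with
    | zero => have : x = 0 := by omega
              subst this; rfl
    | succ y ihy =>
      rcases Nat.eq_or_lt_of_le hxy with heq | hlt
      · subst heq; rfl
      · exact le_trans (ihy (by omega)) (step y)

end Fhier

end OT

/-- If monotone h is eventually bounded by F_γ (standard fast-growing
hierarchy, built from the successor), then the fast-growing hierarchy f built
from h satisfies: f_α is eventually bounded by F_{γ+α} (syntactic sum). -/
theorem stmt19 (h : ℕ → ℕ) (hmono : ∀ a b : ℕ, a ≤ b → h a ≤ h b)
    (f F : OT → ℕ → ℕ)
    (hf0 : ∀ x, f OT.nil x = h x)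
    (hfs : ∀ a x, OT.isSucc a = true → f a x = (f (OT.pred a))^[x + 1] x)
    (hfl : ∀ a x, OT.isLim a → f a x = f (OT.fseq a x) x)
    (hF0 : ∀ x, F OT.nil x = x + 1)
    (hFs : ∀ a x, OT.isSucc a = true → F a x = (F (OT.pred a))^[x + 1] x)
    (hFl : ∀ a x, OT.isLim a → F a x = F (OT.fseq a x) x)
    (g a : OT)
    (hev : ∃ x₀ : ℕ, ∀ x ≥ x₀, h x ≤ F g x) :
    ∃ x₀ : ℕ, ∀ x ≥ x₀, f a x ≤ F (OT.add g a) x := by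
  open OT in
  obtain ⟨x₀, hx₀⟩ := hev
  have FG : ∀ d : OT, Fgood F d := Fgood_all hF0 hFs hFl
  have main : ∀ b : OT, ∀ y : ℕ, f b y ≤ F (OT.add g b) (max y x₀) := by
    suffices H : ∀ o : Ordinal, ∀ b : OT, mu b < o → ∀ y : ℕ,
        f b y ≤ F (OT.add g b) (max y x₀) from
      fun b => H (mu b + 1) b (lt_add_one _)
    intro o
    induction o using Ordinal.induction with
    | _ o IHo =>
      intro b hb y
      have IH : ∀ b' : OT, mu b' < mu b → ∀ y' : ℕ,
          f b' y' ≤ F (OT.add g b') (max y' x₀) :=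
        fun b' hb' => IHo (mu b) hb b' hb'
      set m := max y x₀ with hm
      rcases trichotomy b with hn | hs | hl
      · -- zero case
        subst hn
        rw [hf0, add_nil]
        rcases le_total y x₀ with hyx | hyx
        · calc h y ≤ h x₀ := hmono y x₀ hyx
            _ ≤ F g x₀ := hx₀ x₀ le_rfl
            _ ≤ F g m := (FG g).2.1 x₀ m (le_max_right _ _)
        · calc h y ≤ F g y := hx₀ y hyx
            _ ≤ F g m := (FG g).2.1 y m (le_max_left _ _)
      · -- successor case
        have hbnil : b ≠ nil := isSucc_ne_nil hs
        have hμp : mu (pred b) < mu b := mu_pred_lt hbnil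
        set q := F (OT.add g (pred b)) with hq
        have hq1 : ∀ x, x < q x := (FG _).1
        have hq2 : ∀ x y, x ≤ y → q x ≤ q y := (FG _).2.1
        have key : ∀ n : ℕ, (f (pred b))^[n] y ≤ q^[n] m := by
          intro n
          induction n with
          | zero => exact le_max_left _ _
          | succ n ihn =>
            rw [Function.iterate_succ_apply', Function.iterate_succ_apply']
            calc f (pred b) ((f (pred b))^[n] y)
                ≤ F (OT.add g (pred b)) (max ((f (pred b))^[n] y) x₀) :=
                  IH (pred b) hμp _
              _ ≤ q (q^[n] m) := by
                  refine hq2 _ _ (max_le ?_ ?_)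
                  · exact le_trans ihn le_rfl
                  · exact le_trans (le_max_right y x₀) (self_le_iter hq1 n m)
        have hfin : (f (pred b))^[y + 1] y ≤ q^[m + 1] m := by
          have h1 := key (y + 1)
          have h2 : q^[y + 1] m ≤ q^[m + 1] m := by
            calc q^[y + 1] m ≤ q^[m - y] (q^[y + 1] m) := self_le_iter hq1 (m - y) _
              _ = q^[m + 1] m := by
                  rw [← Function.iterate_add_apply,
                    show m - y + (y + 1) = m + 1 from by
                      have hym : y ≤ m := le_max_left _ _
                      omega]
          exact h1.trans h2
        rw [hfs b y hs]
        have hsgb : OT.isSucc (OT.add g b) = true := by rw [isSucc_add g hbnil]; exact hs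
        rw [hFs _ m hsgb, pred_add g hbnil]
        exact hfin
      · -- limit case
        rw [hfl b y hl]
        have h1 : f (fseq b y) y ≤ F (OT.add g (fseq b y)) m := by
          have := IH (fseq b y) (mu_fseq_lt hl.1 y) y
          rwa [← hm] at this
        have h2 : F (OT.add g (fseq b y)) m ≤ F (OT.add g (fseq b m)) m := by
          rcases fseq_mono hl (le_max_left y x₀ : y ≤ m) with heq | hptw
          · rw [heq]
          · exact (FG (OT.add g (fseq b m))).2.2 m _ (ptw_add_left g hptw)
        have h3 : F (OT.add g (fseq b m)) m = F (OT.add g b) m := by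
          rw [hFl _ m (isLim_add g hl), fseq_add g hl.1]
        exact h1.trans (h2.trans h3.le)
  refine ⟨x₀, fun x hx => ?_⟩
  have := main a x
  rwa [max_eq_left hx] at this
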